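/- Fix a ∈ [0.9, 1] and ε with 0 < ε < 0.05 and a/2 + 4√ε ≤ 1/2. Let G(x) = (3x−1)(x+1)/(3x²) and define F₂ₐ on (1/3, 1/2] by: F₂ₐ(x) = G(x) for 1/3 < x ≤ a/2; F₂ₐ(x) = G(x) − (1/2)(x − a/2)² for a/2 < x ≤ a/2 + √ε; F₂ₐ(x) = G(x) − ε + (1/2)(x − a/2 − 2√ε)² for a/2 + √ε < x ≤ a/2 + 3√ε; F₂ₐ(x) = G(x) − (1/2)(x − a/2 − 4√ε)² for a/2 + 3√ε < x ≤ a/2 + 4√ε; and F₂ₐ(x) = G(x) for a/2 + 4√ε < x ≤ 1/2. Then at every x ∈ (1/3, 1/2) at which F₂ₐ is twice differentiable (i.e., every x in the interior of one of these five pieces), the inequality 2·F₂ₐ'(x)² + (1 − F₂ₐ(x))·F₂ₐ''(x) ≥ 0 holds. -/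

import Mathlib

open Set

set_option maxHeartbeats 1000000

/-- The baseline CDF piece `G(x) = (3x−1)(x+1)/(3x²)`. -/
noncomputable def G23 : ℝ → ℝ := fun x => (3*x - 1)*(x + 1)/(3*x^2)

/-- The perturbed CDF `F₂ₐ`, a piecewise modification of `G23` on `[a/2, a/2 + 4√ε]`. -/
noncomputable def F2A (a ε : ℝ) : ℝ → ℝ := fun x =>
  if x ≤ a/2 then G23 x
  else if x ≤ a/2 + Real.sqrt ε then G23 x - (1/2)*(x - a/2)^2
  else if x ≤ a/2 + 3*Real.sqrt ε then G23 x - ε + (1/2)*(x - a/2 - 2*Real.sqrt ε)^2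
  else if x ≤ a/2 + 4*Real.sqrt ε then G23 x - (1/2)*(x - a/2 - 4*Real.sqrt ε)^2
  else G23 x

noncomputable def g23d : ℝ → ℝ := fun x => 2*(1-x)/(3*x^3)
noncomputable def g23dd : ℝ → ℝ := fun x => (4*x-6)/(3*x^4)

lemma hasDerivAt_G23 {x : ℝ} (hx : x ≠ 0) : HasDerivAt G23 (g23d x) x := by
  have h1 : HasDerivAt (fun y : ℝ => (3*y - 1)*(y + 1)) (3*(x+1) + (3*x-1)) x := by
    have := (((hasDerivAt_id x).const_mul 3).sub_const 1).mul ((hasDerivAt_id x).add_const 1)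
    exact this.congr_deriv (by simp)
  have h2 : HasDerivAt (fun y : ℝ => 3*y^2) (3*(2*x)) x := by
    have := (hasDerivAt_pow 2 x).const_mul 3
    simpa using this
  have hden : (3*x^2 : ℝ) ≠ 0 := by positivity
  have h3 := h1.div h2 hden
  have : g23d x = ((3*(x+1) + (3*x-1)) * (3*x^2) - (3*x-1)*(x+1) * (3*(2*x))) / (3*x^2)^2 := by
    unfold g23d; field_simp; ring
  rw [this]; exact h3

lemma hasDerivAt_g23d {x : ℝ} (hx : x ≠ 0) : HasDerivAt g23d (g23dd x) x := by
  have h1 : HasDerivAt (fun y : ℝ => 2*(1-y)) (-2) x := by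
    have := ((hasDerivAt_id x).const_sub 1).const_mul 2
    simpa using this
  have h2 : HasDerivAt (fun y : ℝ => 3*y^3) (3*(3*x^2)) x := by
    have := (hasDerivAt_pow 3 x).const_mul 3
    simpa using this
  have hden : (3*x^3 : ℝ) ≠ 0 := by simp [pow_ne_zero, hx]
  have h3 := h1.div h2 hden
  have : g23dd x = ((-2) * (3*x^3) - 2*(1-x) * (3*(3*x^2))) / (3*x^3)^2 := by
    unfold g23dd; field_simp; ring
  rw [this]; exact h3

lemma key_deriv (F : ℝ → ℝ) (b q m x : ℝ) (hx : 0 < x)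
    (hF : F =ᶠ[nhds x] fun y => G23 y + b + q*(y-m)^2) :
    deriv F x = g23d x + 2*q*(x-m) ∧
      deriv (deriv F) x = g23dd x + 2*q := by
  have hg : ∀ y : ℝ, y ≠ 0 →
      HasDerivAt (fun y => G23 y + b + q*(y-m)^2) (g23d y + 2*q*(y-m)) y := by
    intro y hy
    have h1 : HasDerivAt (fun z : ℝ => q*(z-m)^2) (q*(2*(y-m))) y := by
      have := (((hasDerivAt_id y).sub_const m).pow 2).const_mul q
      simpa using this
    have := ((hasDerivAt_G23 hy).add_const b).add h1
    exact this.congr_deriv (by ring)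
  have hφ : ∀ y : ℝ, y ≠ 0 →
      HasDerivAt (fun y => g23d y + 2*q*(y-m)) (g23dd y + 2*q) y := by
    intro y hy
    have h1 : HasDerivAt (fun z : ℝ => 2*q*(z-m)) (2*q) y := by
      have := ((hasDerivAt_id y).sub_const m).const_mul (2*q)
      simpa using this
    exact (hasDerivAt_g23d hy).add h1
  constructor
  · rw [hF.deriv_eq]
    exact ((hg x hx.ne').deriv)
  · have h2 : deriv F =ᶠ[nhds x] fun y => g23d y + 2*q*(y-m) := by
      refine hF.deriv.trans ?_
      filter_upwards [eventually_gt_nhds hx] with y hy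
      exact (hg y hy.ne').deriv
    rw [h2.deriv_eq]
    exact (hφ x hx.ne').deriv

lemma bounds23 (x : ℝ) (h1 : 9/20 ≤ x) (h2 : x ≤ 1/2) :
    0 ≤ g23d x ∧ g23d x ≤ 5 ∧ 0 ≤ 1 - G23 x ∧ 1 - G23 x ≤ 1/5 ∧
      -50 ≤ g23dd x ∧ g23dd x ≤ 0 ∧
      14 ≤ 2*(g23d x)^2 + (1 - G23 x)*(g23dd x) := by
  have hx : (0:ℝ) < x := by linarith
  have hQ : 1 - G23 x = (1-2*x)/(3*x^2) := by
    unfold G23; field_simp; ring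
  have hE : 2*(g23d x)^2 + (1 - G23 x)*(g23dd x) = 2/(9*x^6) := by
    unfold g23d g23dd G23; field_simp; ring
  refine ⟨?_, ?_, ?_, ?_, ?_, ?_, ?_⟩
  · unfold g23d
    apply div_nonneg (by linarith) (by positivity)
  · unfold g23d
    rw [div_le_iff₀ (by positivity)]
    nlinarith
  · rw [hQ]
    apply div_nonneg (by linarith) (by positivity)
  · rw [hQ, div_le_iff₀ (by positivity)]
    nlinarith
  · unfold g23dd
    rw [le_div_iff₀ (by positivity)]
    nlinarith [pow_le_pow_left₀ (by norm_num : (0:ℝ) ≤ 9/20) h1 4]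
  · unfold g23dd
    apply div_nonpos_of_nonpos_of_nonneg (by linarith) (by positivity)
  · rw [hE, le_div_iff₀ (by positivity)]
    nlinarith [pow_le_pow_left₀ hx.le h2 6]

lemma ineq_a (P Q R t : ℝ) (hP0 : 0 ≤ P) (hP5 : P ≤ 5) (hQ0 : 0 ≤ Q) (hQ2 : Q ≤ 1/5)
    (hR1 : -50 ≤ R) (hR2 : R ≤ 0) (hE : 14 ≤ 2*P^2 + Q*R)
    (ht1 : -1/80 ≤ t) (ht2 : t ≤ 1/80) :
    0 ≤ 2*(P - t)^2 + (Q + t^2/2)*(R - 1) := by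
  nlinarith [mul_nonneg hP0 (by linarith : (0:ℝ) ≤ 1/80 - t),
             mul_nonneg (by linarith : (0:ℝ) ≤ 5 - P) (by linarith : (0:ℝ) ≤ 1/80 - t),
             mul_nonneg (by linarith : (0:ℝ) ≤ R + 50) (sq_nonneg t),
             mul_nonneg (by linarith : (0:ℝ) ≤ 1/80 - t) (by linarith : (0:ℝ) ≤ 1/80 + t)]

lemma ineq_b (P Q R t u : ℝ) (hP0 : 0 ≤ P) (hP5 : P ≤ 5) (hQ0 : 0 ≤ Q) (hQ2 : Q ≤ 1/5)
    (hR1 : -50 ≤ R) (hR2 : R ≤ 0) (hE : 14 ≤ 2*P^2 + Q*R)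
    (ht1 : -1/80 ≤ t) (ht2 : t ≤ 1/80) (hu0 : 0 ≤ u) (hu1 : u ≤ 1/6400) :
    0 ≤ 2*(P + t)^2 + (Q + u)*(R + 1) := by
  nlinarith [mul_nonneg hP0 (by linarith : (0:ℝ) ≤ 1/80 + t),
             mul_nonneg (by linarith : (0:ℝ) ≤ 5 - P) (by linarith : (0:ℝ) ≤ 1/80 + t),
             mul_nonneg hu0 (by linarith : (0:ℝ) ≤ R + 50),
             sq_nonneg t]

theorem stmt3 (a ε : ℝ) (ha : a ∈ Icc (0.9 : ℝ) 1) (hε : 0 < ε) (hε' : ε < 0.05)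
    (hfit : a/2 + 4*Real.sqrt ε ≤ 1/2) :
    ∀ x, (x ∈ Ioo (1/3 : ℝ) (a/2) ∨ x ∈ Ioo (a/2) (a/2 + Real.sqrt ε) ∨
          x ∈ Ioo (a/2 + Real.sqrt ε) (a/2 + 3*Real.sqrt ε) ∨
          x ∈ Ioo (a/2 + 3*Real.sqrt ε) (a/2 + 4*Real.sqrt ε) ∨
          x ∈ Ioo (a/2 + 4*Real.sqrt ε) (1/2 : ℝ)) →
      0 ≤ 2*(deriv (F2A a ε) x)^2 + (1 - F2A a ε x) * deriv (deriv (F2A a ε)) x := by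
  obtain ⟨ha1, ha2⟩ := ha
  have ha1' : (9/10 : ℝ) ≤ a := by norm_num at ha1 ⊢; linarith
  set s := Real.sqrt ε with hs_def
  have hs0 : 0 < s := Real.sqrt_pos.2 hε
  have hs2 : s^2 = ε := Real.sq_sqrt hε.le
  have hs80 : s ≤ 1/80 := by linarith
  rintro x (h | h | h | h | h)
  · -- piece 1 : F = G23
    obtain ⟨hx1, hx2⟩ := h
    have hx0 : (0:ℝ) < x := by linarith
    have hF : F2A a ε =ᶠ[nhds x] fun y => G23 y + 0 + 0*(y-0)^2 := by
      filter_upwards [isOpen_Ioo.mem_nhds (⟨hx1, hx2⟩ : x ∈ Ioo (1/3 : ℝ) (a/2))] with y hy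
      simp only [F2A]
      rw [if_pos hy.2.le]
      ring
    obtain ⟨hd1, hd2⟩ := key_deriv (F2A a ε) 0 0 0 x hx0 hF
    rw [hd1, hd2, hF.eq_of_nhds]
    have hE : 2*(g23d x)^2 + (1 - G23 x)*(g23dd x) = 2/(9*x^6) := by
      unfold g23d g23dd G23; field_simp; ring
    have hpos : (0:ℝ) ≤ 2/(9*x^6) := by positivity
    refine le_trans hpos (le_of_eq ?_)
    rw [← hE]
    ring
  · -- piece 2 : F = G23 - (1/2)(x-a/2)^2
    obtain ⟨hx1, hx2⟩ := h
    have hx0 : (0:ℝ) < x := by linarith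
    have hxl : 9/20 ≤ x := by linarith
    have hxu : x ≤ 1/2 := by linarith
    have hF : F2A a ε =ᶠ[nhds x] fun y => G23 y + 0 + (-(1/2))*(y-(a/2))^2 := by
      filter_upwards [isOpen_Ioo.mem_nhds (⟨hx1, hx2⟩ : x ∈ Ioo (a/2) (a/2 + s))] with y hy
      simp only [F2A]
      rw [if_neg (not_le.2 hy.1), if_pos hy.2.le]
      ring
    obtain ⟨hd1, hd2⟩ := key_deriv (F2A a ε) 0 (-(1/2)) (a/2) x hx0 hF
    rw [hd1, hd2, hF.eq_of_nhds]
    obtain ⟨hP0, hP5, hQ0, hQ2, hR1, hR2, hE⟩ := bounds23 x hxl hxu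
    have h := ineq_a (g23d x) (1 - G23 x) (g23dd x) (x - a/2) hP0 hP5 hQ0 hQ2 hR1 hR2 hE
      (by linarith) (by linarith)
    convert h using 1
    ring
  · -- piece 3
    obtain ⟨hx1, hx2⟩ := h
    have hx0 : (0:ℝ) < x := by linarith
    have hxl : 9/20 ≤ x := by linarith
    have hxu : x ≤ 1/2 := by linarith
    have hF : F2A a ε =ᶠ[nhds x] fun y => G23 y + (-ε) + (1/2)*(y-(a/2+2*s))^2 := by
      filter_upwards [isOpen_Ioo.mem_nhds (⟨hx1, hx2⟩ : x ∈ Ioo (a/2 + s) (a/2 + 3*s))] with y hy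
      simp only [F2A]
      rw [if_neg (by linarith [hy.1] : ¬ y ≤ a/2), if_neg (not_le.2 hy.1), if_pos hy.2.le]
      ring
    obtain ⟨hd1, hd2⟩ := key_deriv (F2A a ε) (-ε) (1/2) (a/2+2*s) x hx0 hF
    rw [hd1, hd2, hF.eq_of_nhds]
    obtain ⟨hP0, hP5, hQ0, hQ2, hR1, hR2, hE⟩ := bounds23 x hxl hxu
    have ht1 : -(1/80) ≤ x - (a/2+2*s) := by linarith
    have ht2 : x - (a/2+2*s) ≤ 1/80 := by linarith
    have htsq : (x - (a/2+2*s))^2 ≤ s^2 := by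
      nlinarith [mul_pos (by linarith : (0:ℝ) < s - (x-(a/2+2*s)))
        (by linarith : (0:ℝ) < s + (x-(a/2+2*s)))]
    have hε6400 : ε ≤ 1/6400 := by nlinarith [hs2, hs80, hs0.le]
    have htnn : 0 ≤ (x - (a/2+2*s))^2 := sq_nonneg _
    have h := ineq_b (g23d x) (1 - G23 x) (g23dd x) (x - (a/2+2*s))
      (ε - (x - (a/2+2*s))^2/2) hP0 hP5 hQ0 hQ2 hR1 hR2 hE
      (by linarith) (by linarith) (by linarith) (by linarith)
    convert h using 1
    ring
  · -- piece 4
    obtain ⟨hx1, hx2⟩ := h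
    have hx0 : (0:ℝ) < x := by linarith
    have hxl : 9/20 ≤ x := by linarith
    have hxu : x ≤ 1/2 := by linarith
    have hF : F2A a ε =ᶠ[nhds x] fun y => G23 y + 0 + (-(1/2))*(y-(a/2+4*s))^2 := by
      filter_upwards [isOpen_Ioo.mem_nhds (⟨hx1, hx2⟩ : x ∈ Ioo (a/2 + 3*s) (a/2 + 4*s))] with y hy
      simp only [F2A]
      rw [if_neg (by linarith [hy.1] : ¬ y ≤ a/2), if_neg (by linarith [hy.1] : ¬ y ≤ a/2 + s),
        if_neg (not_le.2 hy.1), if_pos hy.2.le]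
      ring
    obtain ⟨hd1, hd2⟩ := key_deriv (F2A a ε) 0 (-(1/2)) (a/2+4*s) x hx0 hF
    rw [hd1, hd2, hF.eq_of_nhds]
    obtain ⟨hP0, hP5, hQ0, hQ2, hR1, hR2, hE⟩ := bounds23 x hxl hxu
    have h := ineq_a (g23d x) (1 - G23 x) (g23dd x) (x - (a/2+4*s)) hP0 hP5 hQ0 hQ2 hR1 hR2 hE
      (by linarith) (by linarith)
    convert h using 1
    ring
  · -- piece 5
    obtain ⟨hx1, hx2⟩ := h
    have hx0 : (0:ℝ) < x := by linarith
    have hF : F2A a ε =ᶠ[nhds x] fun y => G23 y + 0 + 0*(y-0)^2 := by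
      filter_upwards [isOpen_Ioo.mem_nhds (⟨hx1, hx2⟩ : x ∈ Ioo (a/2 + 4*s) (1/2 : ℝ))] with y hy
      simp only [F2A]
      rw [if_neg (by linarith [hy.1] : ¬ y ≤ a/2), if_neg (by linarith [hy.1] : ¬ y ≤ a/2 + s),
        if_neg (by linarith [hy.1] : ¬ y ≤ a/2 + 3*s), if_neg (not_le.2 hy.1)]
      ring
    obtain ⟨hd1, hd2⟩ := key_deriv (F2A a ε) 0 0 0 x hx0 hF
    rw [hd1, hd2, hF.eq_of_nhds]
    have hE : 2*(g23d x)^2 + (1 - G23 x)*(g23dd x) = 2/(9*x^6) := by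
      unfold g23d g23dd G23; field_simp; ring
    have hpos : (0:ℝ) ≤ 2/(9*x^6) := by positivity
    refine le_trans hpos (le_of_eq ?_)
    rw [← hE]
    ring
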